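/- Suppose m ≠ n, m, n ≥ 3, and that for all distinct x, y ∈ G the faces of the darts (x,y) and (y,x) are simple cycles, one of length m and the other of length n. If σ : G → G is a bijection with σ(0) = 0 which is an orientation-reversing automorphism, i.e., σ(x + ρ₀(y−x)) = σ(x) + ρ₀^{−1}(σ(y) − σ(x)) for every dart (x,y), then σ fixes no nonzero element of G: σ(x) = x implies x = 0. -/

import Mathlib

/-- The face-tracing map: it sends the dart `(x, y)` to `(y, y + ρ₀(x − y))`. -/
def faceMap {G : Type*} [AddCommGroup G] (ρ₀ : G → G) : G × G → G × G :=
  fun p => (p.2, p.2 + ρ₀ (p.1 - p.2))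

/-- The face of the dart `p` (its orbit under the face-tracing map) is a simple cycle of
length `k`: it consists of exactly `k` darts whose first components are pairwise distinct. -/
def IsSimpleCycleFace {G : Type*} [AddCommGroup G] (ρ₀ : G → G) (k : ℕ) (p : G × G) : Prop :=
  (faceMap ρ₀)^[k] p = p ∧
    ∀ i < k, ∀ j < k, ((faceMap ρ₀)^[i] p).1 = ((faceMap ρ₀)^[j] p).1 → i = j

/-- If `p` is fixed by `f^[a]` and by `f^[b]`, with the first `b` iterates pairwise
distinct, then `b` divides `a`. -/
lemma aux_period_dvd {α : Type*} (f : α → α) (p : α) (a b : ℕ) (hb : 0 < b)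
    (ha : f^[a] p = p) (hfix : f^[b] p = p)
    (hinj : ∀ i < b, ∀ j < b, f^[i] p = f^[j] p → i = j) : b ∣ a := by
  have hr : a % b < b := Nat.mod_lt _ hb
  have hmul : f^[b * (a / b)] p = p := by
    rw [Function.iterate_mul]
    exact Function.iterate_fixed hfix _
  have hmod : f^[a % b] p = p := by
    have h : f^[a % b + b * (a / b)] p = p := by
      have he : a % b + b * (a / b) = a := Nat.mod_add_div a b
      rw [he]; exact ha
    rw [Function.iterate_add_apply, hmul] at h
    exact h
  exact Nat.dvd_of_mod_eq_zero (hinj (a % b) hr 0 hb (by simpa using hmod))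

/-- Suppose `m ≠ n`, `m, n ≥ 3`, `G` is a finite abelian group of order
`2mn+1`, `ρ₀` is a permutation of `G` fixing `0` acting as a single cycle of length `2mn` on
`G \ {0}`, and for all distinct `x, y ∈ G` the faces of the darts `(x,y)` and `(y,x)` are simple
cycles, one of length `m` and the other of length `n`.  If `σ : G → G` is a bijection with
`σ(0) = 0` which is an orientation-reversing automorphism, then `σ` fixes no nonzero element. -/
theorem orientation_reversing_fixes_only_zero
    (m n : ℕ) (hm : 3 ≤ m) (hn : 3 ≤ n) (hmn : m ≠ n)
    (G : Type*) [AddCommGroup G] [Fintype G] (hcard : Fintype.card G = 2 * m * n + 1)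
    (ρ₀ : Equiv.Perm G) (hρ0 : ρ₀ 0 = 0)
    (hcyc : ∀ a b : G, a ≠ 0 → b ≠ 0 → ∃ k : ℕ, (ρ₀ ^ k) a = b)
    (hfaces : ∀ x y : G, x ≠ y →
      (IsSimpleCycleFace ⇑ρ₀ m (x, y) ∧ IsSimpleCycleFace ⇑ρ₀ n (y, x)) ∨
      (IsSimpleCycleFace ⇑ρ₀ n (x, y) ∧ IsSimpleCycleFace ⇑ρ₀ m (y, x)))
    (σ : G → G) (hσ : Function.Bijective σ) (hσ0 : σ 0 = 0)
    (hOR : ∀ x y : G, x ≠ y → σ (x + ρ₀ (y - x)) = σ x + ρ₀⁻¹ (σ y - σ x)) :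
    ∀ x : G, σ x = x → x = 0 := by
  set φ : G × G → G × G := faceMap ⇑ρ₀ with hφ
  -- the face map preserves darts (pairs with distinct components)
  have hdist : ∀ p : G × G, p.1 ≠ p.2 → (φ p).1 ≠ (φ p).2 := by
    intro p hp
    simp only [hφ, faceMap]
    intro h
    apply hp
    have h0 : ρ₀ (p.1 - p.2) = ρ₀ 0 := by
      rw [hρ0]
      exact (left_eq_add.mp h)
    have := ρ₀.injective h0
    exact sub_eq_zero.mp this
  have hdistIter : ∀ (k : ℕ) (p : G × G), p.1 ≠ p.2 → (φ^[k] p).1 ≠ (φ^[k] p).2 := by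
    intro k
    induction k with
    | zero => intro p hp; simpa using hp
    | succ k ih =>
      intro p hp
      rw [Function.iterate_succ_apply]
      exact ih _ (hdist p hp)
  -- the key local identity expressing that `σ` is orientation-reversing
  have hkey : ∀ p : G × G, p.1 ≠ p.2 → φ (σ (φ p).2, σ (φ p).1) = (σ p.2, σ p.1) := by
    intro p hp
    have hor : σ (p.2 + ρ₀ (p.1 - p.2)) = σ p.2 + ρ₀⁻¹ (σ p.1 - σ p.2) :=
      hOR p.2 p.1 (Ne.symm hp)
    show φ (σ (p.2 + ρ₀ (p.1 - p.2)), σ p.2) = (σ p.2, σ p.1)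
    rw [hor]
    show (σ p.2, σ p.2 + ρ₀ ((σ p.2 + ρ₀⁻¹ (σ p.1 - σ p.2)) - σ p.2)) = (σ p.2, σ p.1)
    rw [add_sub_cancel_left, Equiv.Perm.coe_inv, Equiv.apply_symm_apply, add_sub_cancel]
  -- iterated version
  have hconj : ∀ (k : ℕ) (p : G × G), p.1 ≠ p.2 →
      φ^[k] (σ (φ^[k] p).2, σ (φ^[k] p).1) = (σ p.2, σ p.1) := by
    intro k
    induction k with
    | zero => intro p hp; rfl
    | succ k ih =>
      intro p hp
      have h1 : φ^[k+1] p = φ (φ^[k] p) := Function.iterate_succ_apply' φ k p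
      rw [h1, Function.iterate_succ_apply, hkey (φ^[k] p) (hdistIter k p hp)]
      exact ih p hp
  have hA : ∀ p : G × G, p.1 ≠ p.2 → ∀ a : ℕ, φ^[a] p = p →
      φ^[a] (σ p.2, σ p.1) = (σ p.2, σ p.1) := by
    intro p hp a hfix
    have h := hconj a p hp
    rw [hfix] at h
    exact h
  intro x hx
  by_contra hx0
  have h0x : (0 : G) ≠ x := fun h => hx0 h.symm
  rcases hfaces 0 x h0x with ⟨h1, h2⟩ | ⟨h1, h2⟩
  · -- face of (0,x) has length m, face of (x,0) has length n
    have hfixm : φ^[m] ((x : G), 0) = (x, 0) := by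
      have h := hA (0, x) h0x m h1.1
      simpa [hx, hσ0] using h
    have hfixn : φ^[n] ((0 : G), x) = (0, x) := by
      have h := hA (x, 0) hx0 n h2.1
      simpa [hx, hσ0] using h
    have hdvd1 : m ∣ n :=
      aux_period_dvd φ (0, x) n m (by omega) hfixn h1.1
        (fun i hi j hj hij => h1.2 i hi j hj (congrArg Prod.fst hij))
    have hdvd2 : n ∣ m :=
      aux_period_dvd φ (x, 0) m n (by omega) hfixm h2.1
        (fun i hi j hj hij => h2.2 i hi j hj (congrArg Prod.fst hij))
    exact hmn (Nat.dvd_antisymm hdvd1 hdvd2)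
  · -- face of (0,x) has length n, face of (x,0) has length m
    have hfixn : φ^[n] ((x : G), 0) = (x, 0) := by
      have h := hA (0, x) h0x n h1.1
      simpa [hx, hσ0] using h
    have hfixm : φ^[m] ((0 : G), x) = (0, x) := by
      have h := hA (x, 0) hx0 m h2.1
      simpa [hx, hσ0] using h
    have hdvd1 : n ∣ m :=
      aux_period_dvd φ (0, x) m n (by omega) hfixm h1.1
        (fun i hi j hj hij => h1.2 i hi j hj (congrArg Prod.fst hij))
    have hdvd2 : m ∣ n :=
      aux_period_dvd φ (x, 0) n m (by omega) hfixn h2.1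
        (fun i hi j hj hij => h2.2 i hi j hj (congrArg Prod.fst hij))
    exact hmn (Nat.dvd_antisymm hdvd2 hdvd1)
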